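/- Let 2 < p < ∞ be real. Let X be a Banach lattice and let (x_n)_{n∈ℕ} be a sequence in X that is equivalent to the canonical basis of ℓ_p, i.e., there are constants c, C > 0 such that c (∑_{i=1}^m |λ_i|^p)^{1/p} ≤ ‖∑_{i=1}^m λ_i x_i‖ ≤ C (∑_{i=1}^m |λ_i|^p)^{1/p} for all m and all real scalars λ_1, …, λ_m. Then the sequence of absolute values (|x_n|)_{n∈ℕ} is weakly null: for every continuous linear functional φ on X, φ(|x_n|) → 0 as n → ∞. -/

import Mathlib

open Finset

variable {X : Type} [NormedAddCommGroup X] [Lattice X] [HasSolidNorm X] [IsOrderedAddMonoid X] [NormedSpace ℝ X]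

lemma my_smul_nonneg {r : ℝ} (hr : 0 ≤ r) {v : X} (hv : 0 ≤ v) : 0 ≤ r • v := by
  have hS : IsClosed {t : ℝ | 0 ≤ t • v} :=
    isClosed_nonneg.preimage (continuous_id.smul continuous_const)
  have hdy : ∀ (n k : ℕ), 0 ≤ ((k : ℝ) / 2 ^ n) • v := by
    intro n
    induction n with
    | zero =>
      intro k
      simpa [Nat.cast_smul_eq_nsmul] using nsmul_nonneg hv k
    | succ n ih =>
      intro k
      apply nsmul_two_semiclosed
      have h2 : (2:ℕ) • (((k : ℝ) / 2 ^ (n+1)) • v) = ((k : ℝ) / 2 ^ n) • v := by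
        rw [← Nat.cast_smul_eq_nsmul ℝ, smul_smul]
        congr 1
        push_cast
        ring
      rw [h2]; exact ih k
  have hmem : r ∈ {t : ℝ | 0 ≤ t • v} := by
    set s : ℕ → ℝ := fun n => (⌊r * 2 ^ n⌋₊ : ℝ) / 2 ^ n with hs
    have hpow : ∀ n : ℕ, (0:ℝ) < 2 ^ n := fun n => by positivity
    have h_hi : ∀ n, s n ≤ r := by
      intro n
      rw [hs, div_le_iff₀ (hpow n)]
      exact Nat.floor_le (by positivity)
    have h_lo : ∀ n, r - (1/2 : ℝ) ^ n ≤ s n := by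
      intro n
      rw [hs, le_div_iff₀ (hpow n)]
      have h1 := Nat.lt_floor_add_one (r * 2 ^ n)
      have h2 : ((1:ℝ)/2) ^ n * 2 ^ n = 1 := by
        rw [div_pow, one_pow, div_mul_cancel₀]
        exact (hpow n).ne'
      nlinarith [hpow n]
    have htend : Filter.Tendsto s Filter.atTop (nhds r) := by
      have hl : Filter.Tendsto (fun n : ℕ => r - (1/2:ℝ) ^ n) Filter.atTop (nhds (r - 0)) :=
        (tendsto_const_nhds).sub (tendsto_pow_atTop_nhds_zero_of_lt_one (by norm_num) (by norm_num))
      rw [sub_zero] at hl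
      exact tendsto_of_tendsto_of_tendsto_of_le_of_le hl tendsto_const_nhds h_lo h_hi
    exact hS.mem_of_tendsto htend (Filter.Eventually.of_forall fun n => hdy n _)
  exact hmem

lemma my_smul_le_smul {r : ℝ} (hr : 0 ≤ r) {a b : X} (hab : a ≤ b) : r • a ≤ r • b := by
  have := my_smul_nonneg hr (sub_nonneg.2 hab)
  rwa [smul_sub, sub_nonneg] at this

variable {X : Type} [NormedAddCommGroup X] [Lattice X] [HasSolidNorm X] [IsOrderedAddMonoid X]

lemma sum_abs_le_of_signs : ∀ (m : ℕ) (y : Fin m → X) (u : X),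
    (∀ σ : Fin m → Bool, ∑ j, (if σ j then y j else - y j) ≤ u) →
    ∑ j, |y j| ≤ u := by
  intro m
  induction m with
  | zero => intro y u h; simpa using h (fun _ => true)
  | succ m ih =>
    intro y u h
    have key : ∀ σ : Fin m → Bool,
        ∑ j : Fin m, (if σ j then y j.succ else - y j.succ) ≤ u - |y 0| := by
      intro σ
      have h1 := h (Fin.cons true σ)
      have h2 := h (Fin.cons false σ)
      rw [Fin.sum_univ_succ] at h1 h2
      simp only [Fin.cons_zero, Fin.cons_succ, if_true, Bool.false_eq_true, if_false] at h1 h2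
      have hglb : ∑ j : Fin m, (if σ j then y j.succ else - y j.succ) ≤ (u - y 0) ⊓ (u + y 0) := by
        refine le_inf ?_ ?_
        · rw [le_sub_iff_add_le, add_comm]; exact h1
        · rw [← sub_neg_eq_add, le_sub_iff_add_le, add_comm]; exact h2
      have heq : (u - y 0) ⊓ (u + y 0) = u - |y 0| := by
        rw [abs, sub_sup, sub_neg_eq_add]
      exact hglb.trans_eq heq
    have htail := ih (fun j => y j.succ) (u - |y 0|) key
    rw [Fin.sum_univ_succ]
    rw [← le_sub_iff_add_le']
    exact htail

noncomputable def sg (b : Bool) : ℝ := if b then 1 else -1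

lemma sg_sq (b : Bool) : sg b * sg b = 1 := by cases b <;> simp [sg]

lemma sg_abs (b : Bool) : |sg b| = 1 := by cases b <;> simp [sg]

lemma sum_bool_succ (m : ℕ) (F : (Fin (m+1) → Bool) → ℝ) :
    ∑ s, F s = ∑ b : Bool, ∑ s : Fin m → Bool, F (Fin.cons b s) := by
  rw [← Equiv.sum_comp (Fin.consEquiv (fun _ => Bool)) F, Fintype.sum_prod_type]
  rfl

noncomputable def TT {m : ℕ} (s : Fin m → Bool) : ℝ := ∑ j, sg (s j)

lemma TT_cons (m : ℕ) (b : Bool) (s : Fin m → Bool) :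
    TT (Fin.cons b s) = sg b + TT s := by
  unfold TT
  rw [Fin.sum_univ_succ]
  simp

lemma card_signs (m : ℕ) : ∑ _s : Fin m → Bool, (1:ℝ) = 2 ^ m := by
  rw [Finset.sum_const]
  simp [Fintype.card_fun]

lemma moment2 (m : ℕ) : ∑ s : Fin m → Bool, (TT s) ^ 2 = 2 ^ m * m := by
  induction m with
  | zero => simp [TT]
  | succ m ih =>
    rw [sum_bool_succ m (fun s => TT s ^ 2), Fintype.sum_bool]
    simp only [TT_cons, sg, if_true, Bool.false_eq_true, if_false]
    rw [← Finset.sum_add_distrib]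
    rw [Finset.sum_congr rfl (fun (s : Fin m → Bool) _ =>
      (by ring : ((1:ℝ) + TT s)^2 + (-1 + TT s)^2 = 2*TT s^2 + 2))]
    have h2 : ∑ _x : Fin m → Bool, (2:ℝ) = 2 * 2 ^ m := by
      rw [Finset.sum_const]; simp [Fintype.card_fun]; ring
    rw [Finset.sum_add_distrib, ← Finset.mul_sum, ih, h2]
    push_cast; ring

lemma moment4 (m : ℕ) :
    ∑ s : Fin m → Bool, (TT s) ^ 4 = 2 ^ m * (3 * (m:ℝ)^2 - 2 * m) := by
  induction m with
  | zero => simp [TT]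
  | succ m ih =>
    rw [sum_bool_succ m (fun s => TT s ^ 4), Fintype.sum_bool]
    simp only [TT_cons, sg, if_true, Bool.false_eq_true, if_false]
    rw [← Finset.sum_add_distrib]
    rw [Finset.sum_congr rfl (fun (s : Fin m → Bool) _ =>
      (by ring : ((1:ℝ) + TT s)^4 + (-1 + TT s)^4 = 2*TT s^4 + 12*TT s^2 + 2))]
    have h2 : ∑ _x : Fin m → Bool, (2:ℝ) = 2 * 2 ^ m := by
      rw [Finset.sum_const]; simp [Fintype.card_fun]; ring
    rw [Finset.sum_add_distrib, Finset.sum_add_distrib, ← Finset.mul_sum, ← Finset.mul_sum,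
      ih, moment2, h2]
    push_cast; ring

noncomputable def AA (m : ℕ) : ℝ := ∑ s : Fin m → Bool, |TT s|
noncomputable def Tsig {m : ℕ} (σ s : Fin m → Bool) : ℝ := ∑ j, sg (σ j) * sg (s j)
noncomputable def BB (m : ℕ) (j : Fin m) : ℝ := ∑ s : Fin m → Bool, Real.sign (TT s) * sg (s j)


lemma real_sign_mul_self (t : ℝ) : Real.sign t * t = |t| := by
  rcases lt_trichotomy t 0 with h | h | h
  · rw [Real.sign_of_neg h, abs_of_neg h]; ring
  · simp [h]
  · rw [Real.sign_of_pos h, abs_of_pos h]; ring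

lemma stepA {m : ℕ} (σ : Fin m → Bool) (j : Fin m) :
    ∑ s : Fin m → Bool, Real.sign (Tsig σ s) * sg (s j) = sg (σ j) * BB m j := by
  classical
  set e : (Fin m → Bool) → (Fin m → Bool) := fun s j' => if σ j' then s j' else ! s j' with he
  have hinv : Function.Involutive e := by
    intro s; funext j'; by_cases h : σ j' <;> simp [he, h]
  have hsg : ∀ (s : Fin m → Bool) (j' : Fin m), sg (e s j') = sg (σ j') * sg (s j') := by
    intro s j'
    by_cases h : σ j' <;> cases hb : s j' <;> simp [he, h, hb, sg]
  have hsgsq : ∀ b : Bool, sg b * sg b = 1 := by intro b; cases b <;> simp [sg]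
  have hT : ∀ s, Tsig σ s = TT (e s) := by
    intro s
    unfold Tsig TT
    exact Finset.sum_congr rfl fun j' _ => (hsg s j').symm
  have hterm : ∀ s : Fin m → Bool,
      Real.sign (Tsig σ s) * sg (s j) = sg (σ j) * (Real.sign (TT (e s)) * sg (e s j)) := by
    intro s
    rw [hT s, hsg s j]
    have h1 : sg (σ j) ^ 2 = 1 := by rw [sq]; exact hsgsq _
    ring_nf
    rw [h1]
    ring
  rw [Finset.sum_congr rfl fun s _ => hterm s, ← Finset.mul_sum]
  congr 1
  exact Equiv.sum_comp hinv.toPerm (fun u => Real.sign (TT u) * sg (u j))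

lemma stepB {m : ℕ} (j j' : Fin m) : BB m j = BB m j' := by
  classical
  set P : (Fin m → Bool) ≃ (Fin m → Bool) :=
    Equiv.arrowCongr (Equiv.swap j j') (Equiv.refl Bool) with hP
  have hPs : ∀ s : Fin m → Bool, P s = s ∘ (Equiv.swap j j').symm := fun s => rfl
  have hT : ∀ s, TT (P s) = TT s := by
    intro s
    unfold TT
    rw [hPs]
    exact Equiv.sum_comp (Equiv.swap j j').symm (fun i => sg (s i))
  have hj : ∀ s : Fin m → Bool, (P s) j = s j' := by
    intro s
    rw [hPs]
    simp [Equiv.swap_apply_left]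
  unfold BB
  rw [← Equiv.sum_comp P (fun u => Real.sign (TT u) * sg (u j))]
  exact Finset.sum_congr rfl fun s _ => by rw [hT s, hj s]

lemma stepC (m : ℕ) : ∑ j : Fin m, BB m j = AA m := by
  unfold BB AA
  rw [Finset.sum_comm]
  refine Finset.sum_congr rfl fun s _ => ?_
  rw [← Finset.mul_sum, ← TT, real_sign_mul_self]

lemma keyId {m : ℕ} (σ : Fin m → Bool) (j : Fin m) :
    (m:ℝ) * (∑ s : Fin m → Bool, Real.sign (Tsig σ s) * sg (s j)) = sg (σ j) * AA m := by
  rw [stepA σ j]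
  have : (m:ℝ) * BB m j = AA m := by
    rw [← stepC m]
    rw [Finset.sum_congr rfl fun j' _ => (stepB j' j : BB m j' = BB m j)]
    rw [Finset.sum_const]
    simp
  rw [← this]
  ring

lemma AA_nonneg (m : ℕ) : 0 ≤ AA m := Finset.sum_nonneg fun s _ => abs_nonneg _

lemma AA_lower (m : ℕ) (hm : 1 ≤ m) :
    (2:ℝ)^m * m ≤ Real.sqrt 3 * Real.sqrt m * AA m := by
  have hm' : (1:ℝ) ≤ (m:ℝ) := by exact_mod_cast hm
  set S3 : ℝ := ∑ s : Fin m → Bool, |TT s|^3 with hS3def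
  have hS3nn : 0 ≤ S3 := Finset.sum_nonneg fun s _ => by positivity
  -- Cauchy-Schwarz 1 : (∑ t²)² ≤ (∑ |t|)(∑ |t|³)
  have cs1 : ((2:ℝ)^m * m)^2 ≤ AA m * S3 := by
    have h := Finset.sum_mul_sq_le_sq_mul_sq Finset.univ
      (fun s : Fin m → Bool => Real.sqrt |TT s|)
      (fun s : Fin m → Bool => Real.sqrt |TT s| * |TT s|)
    have e1 : ∑ s : Fin m → Bool, Real.sqrt |TT s| * (Real.sqrt |TT s| * |TT s|)
        = ∑ s : Fin m → Bool, (TT s)^2 := by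
      refine Finset.sum_congr rfl fun s _ => ?_
      rw [← mul_assoc, Real.mul_self_sqrt (abs_nonneg _), abs_mul_abs_self, sq]
    have e2 : ∑ s : Fin m → Bool, (Real.sqrt |TT s|)^2 = AA m := by
      refine Finset.sum_congr rfl fun s _ => Real.sq_sqrt (abs_nonneg _)
    have e3 : ∑ s : Fin m → Bool, (Real.sqrt |TT s| * |TT s|)^2 = S3 := by
      refine Finset.sum_congr rfl fun s _ => ?_
      rw [mul_pow, Real.sq_sqrt (abs_nonneg _)]
      ring
    rw [e1, e2, e3, moment2] at h
    exact h
  -- Cauchy-Schwarz 2 : (∑ |t|³)² ≤ (∑ t²)(∑ t⁴)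
  have cs2 : S3^2 ≤ ((2:ℝ)^m * m) * ((2:ℝ)^m * (3 * (m:ℝ)^2 - 2*m)) := by
    have h := Finset.sum_mul_sq_le_sq_mul_sq Finset.univ
      (fun s : Fin m → Bool => |TT s|)
      (fun s : Fin m → Bool => (TT s)^2)
    have e1 : ∑ s : Fin m → Bool, |TT s| * (TT s)^2 = S3 := by
      refine Finset.sum_congr rfl fun s _ => ?_
      rw [sq, ← abs_mul_abs_self]
      ring
    have e2 : ∑ s : Fin m → Bool, |TT s|^2 = ∑ s : Fin m → Bool, (TT s)^2 :=
      Finset.sum_congr rfl fun s _ => sq_abs _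
    have e3 : ∑ s : Fin m → Bool, ((TT s)^2)^2 = ∑ s : Fin m → Bool, (TT s)^4 := by
      refine Finset.sum_congr rfl fun s _ => by ring
    rw [e1, e2, e3, moment2, moment4] at h
    exact h
  have h2pos : (0:ℝ) < 2^m := by positivity
  have hs3 : Real.sqrt 3 ^ 2 = 3 := Real.sq_sqrt (by norm_num)
  have hsm : Real.sqrt (m:ℝ) ^ 2 = (m:ℝ) := Real.sq_sqrt (Nat.cast_nonneg m)
  have hs3nn : 0 ≤ Real.sqrt 3 := Real.sqrt_nonneg _
  have hsmnn : 0 ≤ Real.sqrt (m:ℝ) := Real.sqrt_nonneg _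
  have hS3le : S3 ≤ Real.sqrt 3 * 2^m * ((m:ℝ) * Real.sqrt m) := by
    have hR : (0:ℝ) ≤ Real.sqrt 3 * 2^m * ((m:ℝ) * Real.sqrt m) := by positivity
    have hexp : (Real.sqrt 3 * 2^m * ((m:ℝ) * Real.sqrt m))^2
        = 3 * ((2:ℝ)^m)^2 * ((m:ℝ)^2 * m) := by
      rw [mul_pow, mul_pow, mul_pow, hs3, hsm]
    have h2 : ((2:ℝ)^m * m) * ((2:ℝ)^m * (3 * (m:ℝ)^2 - 2*m))
        ≤ (Real.sqrt 3 * 2^m * ((m:ℝ) * Real.sqrt m))^2 := by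
      rw [hexp]
      nlinarith [mul_pos h2pos h2pos, hm', sq_nonneg ((m:ℝ))]
    have : S3^2 ≤ (Real.sqrt 3 * 2^m * ((m:ℝ) * Real.sqrt m))^2 := cs2.trans h2
    calc S3 = Real.sqrt (S3^2) := (Real.sqrt_sq hS3nn).symm
    _ ≤ Real.sqrt ((Real.sqrt 3 * 2^m * ((m:ℝ) * Real.sqrt m))^2) := Real.sqrt_le_sqrt this
    _ = Real.sqrt 3 * 2^m * ((m:ℝ) * Real.sqrt m) := Real.sqrt_sq hR
  have final : ((2:ℝ)^m * m)^2 ≤ AA m * (Real.sqrt 3 * 2^m * ((m:ℝ) * Real.sqrt m)) :=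
    cs1.trans (mul_le_mul_of_nonneg_left hS3le (AA_nonneg m))
  have hQ2pos : (0:ℝ) < 2^m * m := by positivity
  refine le_of_mul_le_mul_right ?_ hQ2pos
  nlinarith [final]


lemma key_norm {X : Type} [NormedAddCommGroup X] [Lattice X] [HasSolidNorm X] [IsOrderedAddMonoid X] [NormedSpace ℝ X]
    (m : ℕ) (hm : 1 ≤ m) (y : Fin m → X) (R : ℝ)
    (h : ∀ s : Fin m → Bool, ‖∑ j, sg (s j) • y j‖ ≤ R) :
    ‖∑ j, |y j|‖ ≤ Real.sqrt 3 * Real.sqrt m * R := by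
  classical
  have hR0 : 0 ≤ R := (norm_nonneg _).trans (h (fun _ => true))
  set S : (Fin m → Bool) → X := fun s => ∑ j, sg (s j) • y j with hSdef
  set U : X := ∑ s : Fin m → Bool, |S s| with hUdef
  have hU0 : 0 ≤ U := Finset.sum_nonneg fun s _ => abs_nonneg _
  have hm' : (1:ℝ) ≤ (m:ℝ) := by exact_mod_cast hm
  have hsqm : (1:ℝ) ≤ Real.sqrt m := by
    rw [show (1:ℝ) = Real.sqrt 1 by simp]
    exact Real.sqrt_le_sqrt hm'
  have hs3pos : (0:ℝ) < Real.sqrt 3 := Real.sqrt_pos.2 (by norm_num)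
  have hApos : 0 < AA m := by
    have hl := AA_lower m hm
    by_contra hA
    push_neg at hA
    have h1 : (0:ℝ) < 2^m * m := by positivity
    have h2 : Real.sqrt 3 * Real.sqrt m * AA m ≤ 0 :=
      mul_nonpos_of_nonneg_of_nonpos (by positivity) hA
    linarith
  -- the representation identity
  have hrep : ∀ σ : Fin m → Bool,
      AA m • S σ = (m:ℝ) • ∑ s : Fin m → Bool, Real.sign (Tsig σ s) • S s := by
    intro σ
    have e1 : ∑ s : Fin m → Bool, Real.sign (Tsig σ s) • S s
        = ∑ j : Fin m, (∑ s : Fin m → Bool, Real.sign (Tsig σ s) * sg (s j)) • y j := by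
      rw [hSdef]
      simp only [Finset.smul_sum, smul_smul]
      rw [Finset.sum_comm]
      simp only [← Finset.sum_smul]
    have e2 : ∀ j : Fin m, (m:ℝ) * (∑ s : Fin m → Bool, Real.sign (Tsig σ s) * sg (s j))
        = AA m * sg (σ j) := by
      intro j; rw [keyId σ j]; ring
    have e3 : ∑ j : Fin m, ((m:ℝ) * ∑ s : Fin m → Bool, Real.sign (Tsig σ s) * sg (s j)) • y j
        = ∑ j : Fin m, (AA m * sg (σ j)) • y j :=
      Finset.sum_congr rfl fun j _ => by rw [e2 j]
    calc AA m • S σ = AA m • ∑ j : Fin m, sg (σ j) • y j := rfl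
    _ = ∑ j : Fin m, (AA m * sg (σ j)) • y j := by
        rw [Finset.smul_sum]; simp only [smul_smul]
    _ = ∑ j : Fin m, ((m:ℝ) * ∑ s : Fin m → Bool, Real.sign (Tsig σ s) * sg (s j)) • y j :=
        e3.symm
    _ = (m:ℝ) • ∑ j : Fin m, (∑ s : Fin m → Bool, Real.sign (Tsig σ s) * sg (s j)) • y j := by
        rw [Finset.smul_sum]; simp only [smul_smul]
    _ = (m:ℝ) • ∑ s : Fin m → Bool, Real.sign (Tsig σ s) • S s := by rw [e1]
  -- order bound
  have hle : ∀ σ : Fin m → Bool,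
      ∑ s : Fin m → Bool, Real.sign (Tsig σ s) • S s ≤ U := by
    intro σ
    rw [hUdef]
    refine Finset.sum_le_sum fun s _ => ?_
    rcases Real.sign_apply_eq (Tsig σ s) with hs | hs | hs <;> rw [hs]
    · rw [neg_smul, one_smul]; exact neg_le_abs _
    · rw [zero_smul]; exact abs_nonneg _
    · rw [one_smul]; exact le_abs_self _
  have hSle : ∀ σ : Fin m → Bool, S σ ≤ ((AA m)⁻¹ * m) • U := by
    intro σ
    have h1 : AA m • S σ ≤ (m:ℝ) • U := by
      rw [hrep σ]
      exact my_smul_le_smul (Nat.cast_nonneg m) (hle σ)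
    have h2 : (AA m)⁻¹ • (AA m • S σ) ≤ (AA m)⁻¹ • ((m:ℝ) • U) :=
      my_smul_le_smul (inv_nonneg.2 hApos.le) h1
    rwa [smul_smul, smul_smul, inv_mul_cancel₀ hApos.ne', one_smul] at h2
  -- lattice bound on the sum of abs
  have habs : ∑ j : Fin m, |y j| ≤ ((AA m)⁻¹ * m) • U := by
    refine sum_abs_le_of_signs m y _ fun σ => ?_
    have : ∑ j : Fin m, (if σ j then y j else - y j) = S σ := by
      rw [hSdef]
      refine Finset.sum_congr rfl fun j _ => ?_
      cases hb : σ j <;> simp [sg, hb]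
    rw [this]
    exact hSle σ
  -- norms
  have hKnn : 0 ≤ (AA m)⁻¹ * m := by positivity
  have hnorm1 : ‖∑ j : Fin m, |y j|‖ ≤ ‖((AA m)⁻¹ * m) • U‖ := by
    refine norm_le_norm_of_abs_le_abs ?_
    rw [abs_of_nonneg (Finset.sum_nonneg fun j _ => abs_nonneg _),
      abs_of_nonneg (my_smul_nonneg hKnn hU0)]
    exact habs
  have hnormU : ‖U‖ ≤ 2^m * R := by
    calc ‖U‖ ≤ ∑ s : Fin m → Bool, ‖|S s|‖ := norm_sum_le _ _
    _ = ∑ s : Fin m → Bool, ‖S s‖ := Finset.sum_congr rfl fun s _ => norm_abs_eq_norm _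
    _ ≤ ∑ _s : Fin m → Bool, R := Finset.sum_le_sum fun s _ => h s
    _ = 2^m * R := by rw [Finset.sum_const]; simp [Fintype.card_fun]
  have hnorm2 : ‖((AA m)⁻¹ * m) • U‖ = ((AA m)⁻¹ * m) * ‖U‖ := by
    rw [norm_smul, Real.norm_of_nonneg hKnn]
  have hcoef : (AA m)⁻¹ * m * 2^m ≤ Real.sqrt 3 * Real.sqrt m := by
    rw [mul_assoc, ← div_eq_inv_mul, div_le_iff₀ hApos]
    calc (m:ℝ) * 2^m = 2^m * m := by ring
    _ ≤ Real.sqrt 3 * Real.sqrt m * AA m := AA_lower m hm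
  calc ‖∑ j : Fin m, |y j|‖ ≤ ((AA m)⁻¹ * m) * ‖U‖ := by rw [← hnorm2]; exact hnorm1
  _ ≤ ((AA m)⁻¹ * m) * (2^m * R) := by
      exact mul_le_mul_of_nonneg_left hnormU hKnn
  _ = ((AA m)⁻¹ * m * 2^m) * R := by ring
  _ ≤ (Real.sqrt 3 * Real.sqrt m) * R := mul_le_mul_of_nonneg_right hcoef hR0


lemma lat_abs_add {X : Type} [NormedAddCommGroup X] [Lattice X] [HasSolidNorm X] [IsOrderedAddMonoid X] (a b : X) :
    |a + b| ≤ |a| + |b| := by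
  rw [abs]
  refine sup_le (add_le_add (le_abs_self a) (le_abs_self b)) ?_
  rw [neg_add]
  exact add_le_add (neg_le_abs a) (neg_le_abs b)

lemma lat_abs_sum {X : Type} [NormedAddCommGroup X] [Lattice X] [HasSolidNorm X] [IsOrderedAddMonoid X] {ι : Type*} (s : Finset ι)
    (f : ι → X) : |∑ i ∈ s, f i| ≤ ∑ i ∈ s, |f i| := by
  induction s using Finset.cons_induction with
  | empty => simp
  | cons a s ha ih =>
    rw [Finset.sum_cons, Finset.sum_cons]
    exact (lat_abs_add _ _).trans (add_le_add le_rfl ih)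

lemma block_estimate (p : ℝ) (hp0 : 0 < p) {X : Type} [NormedAddCommGroup X] [Lattice X] [HasSolidNorm X] [IsOrderedAddMonoid X]
    [NormedSpace ℝ X] (x : ℕ → X) (C : ℝ)
    (hupp : ∀ (M : ℕ) (lam : Fin M → ℝ),
      ‖∑ i, lam i • x (i : ℕ)‖ ≤ C * (∑ i, |lam i| ^ p) ^ (1 / p))
    (n : ℕ → ℕ) (hn : StrictMono n) (m : ℕ) (s : Fin m → Bool) :
    ‖∑ k : Fin m, sg (s k) • x (n k)‖ ≤ C * ((m:ℝ)) ^ (1 / p) := by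
  classical
  set M : ℕ := n m with hM
  have hemb : ∀ k : Fin m, n k < M := fun k => hn k.isLt
  set emb : Fin m → Fin M := fun k => ⟨n k, hemb k⟩ with hembdef
  have hinj : Function.Injective emb := by
    intro a b hab
    have : n a = n b := congrArg Fin.val hab
    exact Fin.val_injective (hn.injective this)
  set lam : Fin M → ℝ := fun j => ∑ k : Fin m, if emb k = j then sg (s k) else 0 with hlam
  have h1 : ∑ j : Fin M, lam j • x (j : ℕ) = ∑ k : Fin m, sg (s k) • x (n k) := by
    rw [hlam]
    simp only [Finset.sum_smul, ite_smul, zero_smul]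
    rw [Finset.sum_comm]
    refine Finset.sum_congr rfl fun k _ => ?_
    rw [Finset.sum_ite_eq Finset.univ (emb k) (fun j : Fin M => sg (s k) • x (j : ℕ))]
    simp [hembdef]
  have h2 : ∑ j : Fin M, |lam j| ^ p = (m : ℝ) := by
    have hper : ∀ j : Fin M, |lam j| ^ p = ∑ k : Fin m, if emb k = j then (1:ℝ) else 0 := by
      intro j
      by_cases hj : ∃ k, emb k = j
      · obtain ⟨k0, hk0⟩ := hj
        have hiff : ∀ k : Fin m, (emb k = j) ↔ (k = k0) := fun k =>
          ⟨fun h => hinj (h.trans hk0.symm), fun h => h ▸ hk0⟩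
        have hl : lam j = sg (s k0) := by
          rw [hlam]
          simp only
          rw [Finset.sum_congr rfl fun k _ => if_congr (hiff k) rfl rfl]
          rw [Finset.sum_ite_eq' Finset.univ k0 (fun k => sg (s k))]
          simp
        have hr : ∑ k : Fin m, (if emb k = j then (1:ℝ) else 0) = 1 := by
          rw [Finset.sum_congr rfl fun k _ => if_congr (hiff k) rfl rfl]
          rw [Finset.sum_ite_eq' Finset.univ k0 (fun _ => (1:ℝ))]
          simp
        rw [hl, hr]
        have : |sg (s k0)| = 1 := by cases hb : s k0 <;> simp [sg, hb]
        rw [this, Real.one_rpow]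
      · push_neg at hj
        have hl : lam j = 0 := by
          rw [hlam]; exact Finset.sum_eq_zero fun k _ => if_neg (hj k)
        have hr : ∑ k : Fin m, (if emb k = j then (1:ℝ) else 0) = 0 :=
          Finset.sum_eq_zero fun k _ => if_neg (hj k)
        rw [hl, hr, abs_zero, Real.zero_rpow hp0.ne']
    rw [Finset.sum_congr rfl fun j _ => hper j, Finset.sum_comm]
    rw [Finset.sum_congr rfl fun k _ =>
      Finset.sum_ite_eq Finset.univ (emb k) (fun _ : Fin M => (1:ℝ))]
    simp
  have := hupp M lam
  rw [h1, h2] at this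
  exact this


/-- **Theorem 3.3 consequence.** If `2 < p < ∞` and `(x_n)` is a sequence in a Banach
lattice `X` equivalent to the canonical basis of `ℓ_p`, then the sequence of absolute
values `(|x_n|)` is weakly null. -/
theorem abs_of_lp_sequence_weakly_null (p : ℝ) (hp : 2 < p)
    (X : Type) [NormedAddCommGroup X] [Lattice X] [HasSolidNorm X] [IsOrderedAddMonoid X] [NormedSpace ℝ X] [CompleteSpace X]
    (x : ℕ → X) (c C : ℝ) (hc : 0 < c) (hC : 0 < C)
    (hlow : ∀ (m : ℕ) (lam : Fin m → ℝ),
      c * (∑ i, |lam i| ^ p) ^ (1 / p) ≤ ‖∑ i, lam i • x (i : ℕ)‖)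
    (hupp : ∀ (m : ℕ) (lam : Fin m → ℝ),
      ‖∑ i, lam i • x (i : ℕ)‖ ≤ C * (∑ i, |lam i| ^ p) ^ (1 / p)) :
    ∀ φ : X →L[ℝ] ℝ, Filter.Tendsto (fun n => φ |x n|) Filter.atTop (nhds 0) := by
  intro φ
  have hp0 : 0 < p := by linarith
  by_contra hcon
  rw [Metric.tendsto_atTop] at hcon
  push_neg at hcon
  obtain ⟨ε, hε, hfreq⟩ := hcon
  have hfreq' : ∀ N : ℕ, ∃ n ≥ N, ε ≤ |φ (|x n|)| := by
    intro N
    obtain ⟨n, hn1, hn2⟩ := hfreq N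
    refine ⟨n, hn1, ?_⟩
    rw [Real.dist_eq, sub_zero] at hn2
    linarith
  obtain ⟨n, hnmono, hnprop⟩ :=
    Filter.extraction_of_frequently_atTop (Filter.frequently_atTop.2 hfreq')
  -- main estimate for each m ≥ 1
  have main : ∀ m : ℕ, 1 ≤ m →
      ε * m ≤ ‖φ‖ * (Real.sqrt 3 * Real.sqrt m * (C * (m:ℝ) ^ (1/p))) := by
    intro m hm
    set Y : X := ∑ k : Fin m, |x (n k)| with hY
    have hY0 : 0 ≤ Y := Finset.sum_nonneg fun k _ => abs_nonneg _
    set w : X := ∑ k : Fin m, Real.sign (φ |x (n k)|) • |x (n k)| with hw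
    have hφw : ε * m ≤ φ w := by
      have : φ w = ∑ k : Fin m, |φ (|x (n k)|)| := by
        rw [hw, map_sum]
        refine Finset.sum_congr rfl fun k _ => ?_
        rw [map_smul, smul_eq_mul]
        rcases lt_trichotomy (φ |x (n k)|) 0 with h | h | h
        · rw [Real.sign_of_neg h, abs_of_neg h]; ring
        · simp [h]
        · rw [Real.sign_of_pos h, abs_of_pos h]; ring
      rw [this]
      calc ε * m = ∑ _k : Fin m, ε := by rw [Finset.sum_const]; simp [mul_comm]
      _ ≤ ∑ k : Fin m, |φ (|x (n k)|)| := Finset.sum_le_sum fun k _ => hnprop k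
    have hwY : |w| ≤ |Y| := by
      rw [abs_of_nonneg hY0, hw, hY]
      refine (lat_abs_sum _ _).trans (Finset.sum_le_sum fun k _ => ?_)
      rcases Real.sign_apply_eq (φ |x (n k)|) with hs | hs | hs <;> rw [hs]
      · rw [neg_smul, one_smul, abs_neg, abs_abs]
      · rw [zero_smul, abs_zero]; exact abs_nonneg _
      · rw [one_smul, abs_abs]
    have hnw : ‖w‖ ≤ ‖Y‖ := norm_le_norm_of_abs_le_abs hwY
    have hYn : ‖Y‖ ≤ Real.sqrt 3 * Real.sqrt m * (C * (m:ℝ) ^ (1/p)) := by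
      rw [hY]
      exact key_norm m hm (fun k => x (n k)) (C * (m:ℝ) ^ (1/p))
        (fun s => block_estimate p hp0 x C hupp n hnmono m s)
    calc ε * m ≤ φ w := hφw
    _ ≤ ‖φ‖ * ‖w‖ := by
        have := φ.le_opNorm w
        calc φ w ≤ |φ w| := le_abs_self _
        _ = ‖φ w‖ := (Real.norm_eq_abs _).symm
        _ ≤ ‖φ‖ * ‖w‖ := this
    _ ≤ ‖φ‖ * ‖Y‖ := mul_le_mul_of_nonneg_left hnw (norm_nonneg φ)
    _ ≤ ‖φ‖ * (Real.sqrt 3 * Real.sqrt m * (C * (m:ℝ) ^ (1/p))) :=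
        mul_le_mul_of_nonneg_left hYn (norm_nonneg φ)
  -- derive contradiction
  set K : ℝ := ‖φ‖ * Real.sqrt 3 * C with hK
  have hK0 : 0 ≤ K := by positivity
  set q : ℝ := 1/2 + 1/p with hq
  have hq1 : 0 < 1 - q := by
    have h2 : 1/p < 1/2 := by
      rw [div_lt_div_iff₀ hp0 (by norm_num)]
      linarith
    rw [hq]; linarith
  have htend : Filter.Tendsto (fun mm : ℕ => (mm:ℝ) ^ (1-q)) Filter.atTop Filter.atTop :=
    (tendsto_rpow_atTop hq1).comp tendsto_natCast_atTop_atTop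
  obtain ⟨m, hm1, hmg⟩ :=
    ((htend.eventually_gt_atTop (K/ε)).and (Filter.eventually_ge_atTop 1)).exists
  -- here hm1 : K/ε < m^(1-q), hmg : 1 ≤ m
  have hmR : (1:ℝ) ≤ (m:ℝ) := by exact_mod_cast hmg
  have hmpos : (0:ℝ) < m := by linarith
  have hmain := main m hmg
  have hsplit : Real.sqrt (m:ℝ) * (m:ℝ) ^ (1/p) = (m:ℝ) ^ q := by
    rw [Real.sqrt_eq_rpow, hq, Real.rpow_add hmpos]
  have hmain2 : ε * m ≤ K * (m:ℝ) ^ q := by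
    calc ε * m ≤ ‖φ‖ * (Real.sqrt 3 * Real.sqrt m * (C * (m:ℝ) ^ (1/p))) := hmain
    _ = K * (Real.sqrt (m:ℝ) * (m:ℝ) ^ (1/p)) := by rw [hK]; ring
    _ = K * (m:ℝ) ^ q := by rw [hsplit]
  have hKlt : K < ε * (m:ℝ) ^ (1-q) := by
    rw [div_lt_iff₀ hε] at hm1
    linarith [hm1]
  have hqpos : (0:ℝ) < (m:ℝ) ^ q := Real.rpow_pos_of_pos hmpos q
  have h5 : K * (m:ℝ) ^ q < ε * (m:ℝ) ^ (1-q) * (m:ℝ) ^ q :=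
    mul_lt_mul_of_pos_right hKlt hqpos
  have hexp : 1 - q + q = 1 := by ring
  have h6 : ε * (m:ℝ) ^ (1-q) * (m:ℝ) ^ q = ε * m := by
    rw [mul_assoc, ← Real.rpow_add hmpos, hexp, Real.rpow_one]
  linarith
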